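/- Let σ, θ ∈ (0,∞), let m be the measure on ℝ given by m(du) = (2/σ²) du + (2/θ) δ₀(du), and let q be the associated function. Then for all y, x ∈ ℝ: if y > 0 then q(y,x) = (x−y)²/σ² + 2 x⁻/θ; if y = 0 then q(y,x) = x²/σ² + |x|/θ; and if y < 0 then q(y,x) = (x−y)²/σ² + 2 x⁺/θ, where x⁺ = max(x,0) and x⁻ = −min(x,0). -/

import Mathlib

set_option linter.unreachableTactic false
set_option linter.unusedTactic false

open MeasureTheory

/-- The speed measure of sticky Brownian motion:
`m(du) = (2/σ²) du + (2/θ) δ₀(du)`. -/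
noncomputable def stickyMeasure (σ θ : ℝ) : Measure ℝ :=
  ENNReal.ofReal (2 / σ^2) • (volume : Measure ℝ)
    + ENNReal.ofReal (2 / θ) • Measure.dirac 0

/-- Signed measure of the open interval between `y` and `u`:
`m((y,u))` for `u ≥ y` and `-m((u,y))` for `u < y`. -/
noncomputable def signedIoo (m : Measure ℝ) (y u : ℝ) : ℝ :=
  if y ≤ u then (m (Set.Ioo y u)).toReal else -(m (Set.Ioo u y)).toReal

/-- The function `q(y,x) = (1/2) m({y}) |x−y| + ∫_y^x m((y,u)) du`. -/
noncomputable def qFun (m : Measure ℝ) (y x : ℝ) : ℝ :=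
  (1 / 2) * (m {y}).toReal * |x - y| + ∫ u in y..x, signedIoo m y u

/-! ### Auxiliary lemmas -/

lemma ii_neg (a b : ℝ) :
    IntervalIntegrable (fun u => if u < 0 then (1:ℝ) else 0) volume a b := by
  have : (fun u : ℝ => if u < 0 then (1:ℝ) else 0) = (Set.Iio 0).indicator (fun _ => 1) := by
    ext u; simp [Set.indicator_apply]
  refine this ▸ ⟨?_, ?_⟩ <;>
    exact (integrableOn_const measure_Ioc_lt_top.ne).indicator measurableSet_Iio

lemma ii_pos (a b : ℝ) :
    IntervalIntegrable (fun u => if 0 < u then (1:ℝ) else 0) volume a b := by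
  have : (fun u : ℝ => if 0 < u then (1:ℝ) else 0) = (Set.Ioi 0).indicator (fun _ => 1) := by
    ext u; simp [Set.indicator_apply]
  refine this ▸ ⟨?_, ?_⟩ <;>
    exact (integrableOn_const measure_Ioc_lt_top.ne).indicator measurableSet_Ioi

lemma int_neg (a b : ℝ) :
    ∫ u in a..b, (if u < 0 then (1:ℝ) else 0) = min b 0 - min a 0 := by
  have key : ∀ c : ℝ, ∫ u in (0:ℝ)..c, (if u < 0 then (1:ℝ) else 0) = min c 0 := by
    intro c
    rcases le_or_gt 0 c with h | h
    · rw [intervalIntegral.integral_congr (g := fun _ => (0:ℝ))]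
      · simp [min_eq_right h]
      · intro u hu
        rw [Set.uIcc_of_le h] at hu
        simp only [if_neg (not_lt.2 hu.1)]
    · rw [intervalIntegral.integral_congr_ae (g := fun _ => (1:ℝ))]
      · simp [min_eq_left h.le]
      · have h0 : (volume : Measure ℝ) {(0:ℝ)} = 0 := measure_singleton 0
        filter_upwards [measure_eq_zero_iff_ae_notMem.1 h0] with u hu hmem
        rw [Set.uIoc_of_ge h.le] at hmem
        have : u < 0 := lt_of_le_of_ne hmem.2 (by simpa using hu)
        simp [this]
  rw [← intervalIntegral.integral_add_adjacent_intervals (b := 0) (ii_neg a 0) (ii_neg 0 b),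
    key, intervalIntegral.integral_symm, key]
  ring

lemma int_pos (a b : ℝ) :
    ∫ u in a..b, (if 0 < u then (1:ℝ) else 0) = max b 0 - max a 0 := by
  have key : ∀ c : ℝ, ∫ u in (0:ℝ)..c, (if 0 < u then (1:ℝ) else 0) = max c 0 := by
    intro c
    rcases le_or_gt c 0 with h | h
    · rw [intervalIntegral.integral_congr (g := fun _ => (0:ℝ))]
      · simp [max_eq_right h]
      · intro u hu
        rw [Set.uIcc_of_ge h] at hu
        simp only [if_neg (not_lt.2 hu.2)]
    · rw [intervalIntegral.integral_congr_ae (g := fun _ => (1:ℝ))]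
      · simp [max_eq_left h.le]
      · filter_upwards with u hmem
        rw [Set.uIoc_of_le h.le] at hmem
        simp [hmem.1]
  rw [← intervalIntegral.integral_add_adjacent_intervals (b := 0) (ii_pos a 0) (ii_pos 0 b),
    key, intervalIntegral.integral_symm, key]
  ring

lemma sticky_Ioo (σ θ : ℝ) (hσ : 0 < σ) (hθ : 0 < θ) (a b : ℝ) (hab : a ≤ b) :
    ((stickyMeasure σ θ) (Set.Ioo a b)).toReal
      = 2 / σ^2 * (b - a) + (if a < 0 ∧ 0 < b then 2 / θ else 0) := by
  have h1 : (0:ℝ) ≤ 2 / σ^2 * (b - a) := by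
    have := sub_nonneg.2 hab; positivity
  have hd : Measure.dirac (0:ℝ) (Set.Ioo a b) = if a < 0 ∧ 0 < b then 1 else 0 := by
    rw [Measure.dirac_apply' _ measurableSet_Ioo]
    by_cases h : a < 0 ∧ 0 < b <;> simp [Set.indicator_apply, Set.mem_Ioo, h]
  rw [stickyMeasure, Measure.add_apply, Measure.smul_apply, Measure.smul_apply,
    Real.volume_Ioo, hd, smul_eq_mul, smul_eq_mul, ← ENNReal.ofReal_mul (by positivity)]
  by_cases h2 : a < 0 ∧ 0 < b
  · rw [if_pos h2, if_pos h2, mul_one,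
      ENNReal.toReal_add ENNReal.ofReal_ne_top ENNReal.ofReal_ne_top,
      ENNReal.toReal_ofReal h1, ENNReal.toReal_ofReal (by positivity)]
  · rw [if_neg h2, if_neg h2, mul_zero, add_zero, add_zero, ENNReal.toReal_ofReal h1]

lemma sticky_singleton (σ θ : ℝ) (hθ : 0 < θ) (y : ℝ) :
    ((stickyMeasure σ θ) {y}).toReal = if y = 0 then 2 / θ else 0 := by
  have hd : Measure.dirac (0:ℝ) {y} = if y = 0 then 1 else 0 := by
    rw [Measure.dirac_apply' _ (measurableSet_singleton y)]
    by_cases h : y = 0 <;> simp [Set.indicator_apply, eq_comm, h]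
  rw [stickyMeasure, Measure.add_apply, Measure.smul_apply, Measure.smul_apply,
    Real.volume_singleton, hd, smul_eq_mul, smul_eq_mul, mul_zero, zero_add]
  by_cases h : y = 0 <;>
    simp [h, ENNReal.toReal_ofReal (by positivity : (0:ℝ) ≤ 2/θ)]

lemma signedIoo_eq (σ θ : ℝ) (hσ : 0 < σ) (hθ : 0 < θ) (y u : ℝ) :
    signedIoo (stickyMeasure σ θ) y u
      = 2 / σ^2 * (u - y)
        + 2 / θ * (if y < 0 ∧ 0 < u then 1 else if u < 0 ∧ 0 < y then -1 else 0) := by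
  unfold signedIoo
  rcases le_or_gt y u with h | h
  · rw [if_pos h, sticky_Ioo σ θ hσ hθ y u h]
    have himp : ¬ (u < 0 ∧ 0 < y) := by
      rintro ⟨h1, h2⟩; exact absurd (h2.trans_le h) (not_lt.2 h1.le)
    by_cases hc : y < 0 ∧ 0 < u <;> simp [hc, himp] <;> ring
  · rw [if_neg (not_le.2 h), sticky_Ioo σ θ hσ hθ u y h.le]
    have himp : ¬ (y < 0 ∧ 0 < u) := by
      rintro ⟨h1, h2⟩; exact absurd (h2.trans h) (not_lt.2 h1.le)
    by_cases hc : u < 0 ∧ 0 < y <;> simp [hc, himp] <;> ring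

lemma int_lin (A c y x : ℝ) (f : ℝ → ℝ) (hf : IntervalIntegrable f volume y x) :
    ∫ u in y..x, (A * (u - y) + c * f u)
      = A * ((x - y)^2 / 2) + c * ∫ u in y..x, f u := by
  have h1 : IntervalIntegrable (fun u => A * (u - y)) volume y x :=
    (continuous_const.mul (continuous_id.sub continuous_const)).intervalIntegrable y x
  rw [intervalIntegral.integral_add h1 (hf.const_mul c),
    intervalIntegral.integral_const_mul, intervalIntegral.integral_const_mul,
    intervalIntegral.integral_sub intervalIntegral.intervalIntegrable_id
      intervalIntegrable_const,
    integral_id, intervalIntegral.integral_const, smul_eq_mul]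
  ring

theorem q_sticky_bm (σ θ : ℝ) (hσ : 0 < σ) (hθ : 0 < θ) (y x : ℝ) :
    (0 < y → qFun (stickyMeasure σ θ) y x
        = (x - y)^2 / σ^2 + 2 * (-min x 0) / θ) ∧
    (y = 0 → qFun (stickyMeasure σ θ) y x = x^2 / σ^2 + |x| / θ) ∧
    (y < 0 → qFun (stickyMeasure σ θ) y x
        = (x - y)^2 / σ^2 + 2 * max x 0 / θ) := by
  have hσ2 : σ^2 ≠ 0 := by positivity
  have hθ' : θ ≠ 0 := hθ.ne'
  refine ⟨fun hy => ?_, fun hy => ?_, fun hy => ?_⟩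
  · -- y > 0
    have hfe : ∀ u, signedIoo (stickyMeasure σ θ) y u
        = 2 / σ^2 * (u - y) + (-(2/θ)) * (if u < 0 then (1:ℝ) else 0) := by
      intro u
      rw [signedIoo_eq σ θ hσ hθ]
      have h1 : ¬ (y < 0 ∧ 0 < u) := fun h => absurd hy (not_lt.2 h.1.le)
      by_cases h2 : u < 0 <;> simp [h1, h2, hy] <;> ring
    rw [qFun, sticky_singleton σ θ hθ, if_neg hy.ne', mul_zero, zero_mul, zero_add,
      intervalIntegral.integral_congr (fun u _ => hfe u),
      int_lin _ _ _ _ _ (ii_neg y x), int_neg, min_eq_right hy.le]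
    field_simp
    ring
  · -- y = 0
    subst hy
    have hfe : ∀ u, signedIoo (stickyMeasure σ θ) 0 u
        = 2 / σ^2 * (u - 0) + 0 * (if u < 0 then (1:ℝ) else 0) := by
      intro u
      rw [signedIoo_eq σ θ hσ hθ]
      simp
    rw [qFun, sticky_singleton σ θ hθ, if_pos rfl,
      intervalIntegral.integral_congr (fun u _ => hfe u),
      int_lin _ _ _ _ _ (ii_neg 0 x)]
    field_simp
    ring
  · -- y < 0
    have hfe : ∀ u, signedIoo (stickyMeasure σ θ) y u
        = 2 / σ^2 * (u - y) + (2/θ) * (if 0 < u then (1:ℝ) else 0) := by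
      intro u
      rw [signedIoo_eq σ θ hσ hθ]
      have h1 : ¬ (u < 0 ∧ 0 < y) := fun h => absurd hy (not_lt.2 h.2.le)
      by_cases h2 : 0 < u <;> simp [h1, h2, hy] <;> ring
    rw [qFun, sticky_singleton σ θ hθ, if_neg hy.ne, mul_zero, zero_mul, zero_add,
      intervalIntegral.integral_congr (fun u _ => hfe u),
      int_lin _ _ _ _ _ (ii_pos y x), int_pos, max_eq_right hy.le]
    field_simp
    ring
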